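/- Let C and Cᵢ⁰ be symmetric positive definite real 3×3 matrices with det Cᵢ⁰ = 1, let λ ≥ 0 and ε ≥ 0, and set C̄ := (det C)^{-1/3}·C, A := C̄^{-1/2}·(Cᵢ⁰ + λ·C̄)·C̄^{-1/2}, φ₀ := (det A)^{1/3}, φ := φ₀ − (tr A/(3φ₀))·ε. Then: (a) A is symmetric positive definite; (b) the matrix sqrt(φ²·I + 4ε·A) + φ·I is invertible; (c) X := 2·A·(sqrt(φ²·I + 4ε·A) + φ·I)⁻¹ is symmetric positive definite; and (d) the IFEBM output Cᵢ := (det(C^{1/2}·X·C^{1/2}))^{-1/3}·C^{1/2}·X·C^{1/2} is symmetric positive definite with det Cᵢ = 1. Hence the iteration-free update is well defined for every time step and exactly preserves the symmetry, positive definiteness and unimodularity of the internal variable. -/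

import Mathlib

open Matrix

abbrev Mat := Matrix (Fin 3) (Fin 3) ℝ

/-- The unimodular part of a matrix. -/
noncomputable def unimod (M : Mat) : Mat := (M.det ^ (-(1 : ℝ) / 3)) • M

/-- The unique positive semidefinite square root of a positive semidefinite matrix
(junk value `0` on matrices that are not positive semidefinite). -/
noncomputable def msqrt (M : Mat) : Mat := by
  classical exact if h : M.PosSemidef then
    (h.1.eigenvectorUnitary : Mat) * diagonal ((↑) ∘ Real.sqrt ∘ h.1.eigenvalues) *
      (star h.1.eigenvectorUnitary : Mat) else 0

/-- The matrix `A = C̄^{-1/2}·(Cᵢ⁰ + λ·C̄)·C̄^{-1/2}` of the IFEBM update. -/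
noncomputable def ifebmA (lam : ℝ) (C Ci : Mat) : Mat :=
  (msqrt (unimod C))⁻¹ * (Ci + lam • unimod C) * (msqrt (unimod C))⁻¹

/-- The scalar `φ = φ₀ − (tr A/(3φ₀))·ε` of the IFEBM update, `φ₀ = (det A)^{1/3}`. -/
noncomputable def ifebmPhi (lam eps : ℝ) (C Ci : Mat) : ℝ :=
  (ifebmA lam C Ci).det ^ ((1 : ℝ) / 3) -
    (ifebmA lam C Ci).trace / (3 * (ifebmA lam C Ci).det ^ ((1 : ℝ) / 3)) * eps

/-- The matrix `X = 2·A·(sqrt(φ²·I + 4ε·A) + φ·I)⁻¹` of the IFEBM update. -/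
noncomputable def ifebmX (lam eps : ℝ) (C Ci : Mat) : Mat :=
  (2 : ℝ) • ifebmA lam C Ci *
    (msqrt ((ifebmPhi lam eps C Ci) ^ 2 • (1 : Mat) + (4 * eps) • ifebmA lam C Ci) +
      (ifebmPhi lam eps C Ci) • (1 : Mat))⁻¹

/-- The IFEBM updated internal variable `Cᵢ = unimod (C^{1/2}·X·C^{1/2})`. -/
noncomputable def ifebmCi (lam eps : ℝ) (C Ci : Mat) : Mat :=
  unimod (msqrt C * ifebmX lam eps C Ci * msqrt C)

/-! ### Auxiliary lemmas -/

lemma herm_smul {M : Mat} (h : M.IsHermitian) (c : ℝ) : (c • M).IsHermitian := by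
  show (c • M)ᴴ = c • M
  rw [conjTranspose_smul, h.eq]; simp

lemma posSemidef_smul' {M : Mat} (hM : M.PosSemidef) {c : ℝ} (hc : 0 ≤ c) :
    (c • M).PosSemidef := by
  rw [posSemidef_iff_dotProduct_mulVec]
  refine ⟨herm_smul hM.1 c, fun x => ?_⟩
  rw [smul_mulVec, dotProduct_smul]
  exact smul_nonneg hc ((posSemidef_iff_dotProduct_mulVec.mp hM).2 x)

lemma isUnit_conjT {B : Mat} (hB : IsUnit B) : IsUnit Bᴴ := by
  rw [Matrix.isUnit_iff_isUnit_det] at hB ⊢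
  rw [Matrix.det_conjTranspose]
  simpa using hB

lemma posDef_conjT {M B : Mat} (hM : M.PosDef) (hB : IsUnit B) :
    (Bᴴ * M * B).PosDef := by
  rw [posDef_iff_dotProduct_mulVec]
  refine ⟨isHermitian_conjTranspose_mul_mul B hM.1, fun x hx => ?_⟩
  have h1 : B *ᵥ x ≠ 0 := fun h =>
    hx ((Matrix.mulVec_injective_iff_isUnit.mpr hB) (by simpa using h))
  simpa only [star_mulVec, dotProduct_mulVec, vecMul_vecMul] using (posDef_iff_dotProduct_mulVec.mp hM).2 h1

lemma posDef_conjT' {M B : Mat} (hM : M.PosDef) (hB : IsUnit B) :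
    (B * M * Bᴴ).PosDef := by
  simpa only [conjTranspose_conjTranspose] using posDef_conjT hM (isUnit_conjT hB)

lemma posDef_conj_posDef {M B : Mat} (hM : M.PosDef) (hB : B.PosDef) :
    (B * M * B).PosDef := by
  have := posDef_conjT' hM hB.isUnit
  rwa [hB.1.eq] at this

lemma posDef_of_posSemidef_isUnit {M : Mat} (hM : M.PosSemidef) (h : IsUnit M) :
    M.PosDef := by
  rw [posDef_iff_dotProduct_mulVec]
  refine ⟨hM.1, fun x hx => ?_⟩
  rcases ((posSemidef_iff_dotProduct_mulVec.mp hM).2 x).lt_or_eq with hlt | heq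
  · exact hlt
  · exact absurd ((Matrix.mulVec_injective_iff_isUnit.mpr h)
      (by simpa using (hM.dotProduct_mulVec_zero_iff x).mp heq.symm)) hx

open scoped MatrixOrder in
lemma msqrt_eq {M : Mat} (hM : M.PosSemidef) : msqrt M = CFC.sqrt M := by
  unfold msqrt
  rw [dif_pos hM, CFC.sqrt_eq_real_sqrt M hM.nonneg, cfcₙ_eq_cfc, hM.1.cfc_eq, IsHermitian.cfc,
    Unitary.conjStarAlgAut_apply]
  rfl

open scoped MatrixOrder in
lemma msqrt_mul_self {M : Mat} (hM : M.PosDef) : msqrt M * msqrt M = M := by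
  rw [msqrt_eq hM.posSemidef]; exact CFC.sqrt_mul_sqrt_self M hM.posSemidef.nonneg

open scoped MatrixOrder in
lemma msqrt_posDef {M : Mat} (hM : M.PosDef) : (msqrt M).PosDef := by
  have hpsd : (msqrt M).PosSemidef := by
    rw [msqrt_eq hM.posSemidef]; exact (CFC.sqrt_nonneg M).posSemidef
  refine posDef_of_posSemidef_isUnit hpsd ?_
  rw [Matrix.isUnit_iff_isUnit_det]
  have h2 : (msqrt M).det * (msqrt M).det = M.det := by
    rw [← det_mul, msqrt_mul_self hM]
  have h3 : M.det ≠ 0 := ne_of_gt hM.det_pos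
  exact isUnit_iff_ne_zero.mpr (fun h => h3 (by rw [← h2, h, mul_zero]))

lemma unimod_posDef {M : Mat} (hM : M.PosDef) : (unimod M).PosDef := by
  have h : (0:ℝ) < M.det ^ (-(1:ℝ)/3) := Real.rpow_pos_of_pos hM.det_pos _
  rw [posDef_iff_dotProduct_mulVec]
  refine ⟨herm_smul hM.1 _, fun x hx => ?_⟩
  show 0 < star x ⬝ᵥ ((M.det ^ (-(1:ℝ)/3)) • M) *ᵥ x
  rw [smul_mulVec, dotProduct_smul]
  exact smul_pos h ((posDef_iff_dotProduct_mulVec.mp hM).2 hx)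

lemma unimod_det {M : Mat} (hM : 0 < M.det) : (unimod M).det = 1 := by
  unfold unimod
  rw [Matrix.det_smul]
  have h : (M.det ^ (-(1:ℝ)/3)) ^ (Fintype.card (Fin 3)) = M.det ^ (-(1:ℝ)) := by
    rw [Fintype.card_fin, ← Real.rpow_natCast (M.det ^ (-(1:ℝ)/3)) 3,
      ← Real.rpow_mul hM.le]
    norm_num
  rw [h, Real.rpow_neg_one]
  exact inv_mul_cancel₀ (ne_of_gt hM)

lemma conj_mul_conj {U : Mat} (h : star U * U = 1) (D E : Mat) :
    (U * D * star U) * (U * E * star U) = U * (D * E) * star U := by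
  calc (U * D * star U) * (U * E * star U)
      = U * D * (star U * U) * E * star U := by noncomm_ring
    _ = U * (D * E) * star U := by rw [h]; noncomm_ring

lemma spectral_real {A : Mat} (hH : A.IsHermitian) :
    A = (hH.eigenvectorUnitary : Mat) * diagonal hH.eigenvalues *
        star (hH.eigenvectorUnitary : Mat) := by
  have := hH.spectral_theorem
  rwa [RCLike.ofReal_real_eq_id, Function.id_comp] at this

/-- the IFEBM update is well defined for every time step and exactly
preserves symmetry, positive definiteness and unimodularity of the internal variable:
(a) `A` is symmetric positive definite, (b) `sqrt(φ²·I + 4ε·A) + φ·I` is invertible,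
(c) `X` is symmetric positive definite, (d) the output `Cᵢ` is symmetric positive
definite with `det Cᵢ = 1`. -/
theorem ifebm_well_defined (C Ci0 : Mat) (hC : C.PosDef) (hCi0 : Ci0.PosDef)
    (h1 : Ci0.det = 1) (lam eps : ℝ) (hlam : 0 ≤ lam) (heps : 0 ≤ eps) :
    (ifebmA lam C Ci0).PosDef ∧
      IsUnit (msqrt ((ifebmPhi lam eps C Ci0) ^ 2 • (1 : Mat) +
          (4 * eps) • ifebmA lam C Ci0) + (ifebmPhi lam eps C Ci0) • (1 : Mat)) ∧
      (ifebmX lam eps C Ci0).PosDef ∧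
      (ifebmCi lam eps C Ci0).PosDef ∧ (ifebmCi lam eps C Ci0).det = 1 := by
  -- (a)
  have hCb : (unimod C).PosDef := unimod_posDef hC
  have hB : (msqrt (unimod C)).PosDef := msqrt_posDef hCb
  have hBi : ((msqrt (unimod C))⁻¹).PosDef := hB.inv
  have hMid : (Ci0 + lam • unimod C).PosDef :=
    hCi0.add_posSemidef (posSemidef_smul' hCb.posSemidef hlam)
  have hA : (ifebmA lam C Ci0).PosDef := posDef_conj_posDef hMid hBi
  set A := ifebmA lam C Ci0 with hAdef
  set φ := ifebmPhi lam eps C Ci0 with hφdef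
  -- spectral setup
  have hH : A.IsHermitian := hA.1
  set U : Mat := (hH.eigenvectorUnitary : Mat) with hUdef
  set μ : Fin 3 → ℝ := hH.eigenvalues with hμdef
  have hUU : U * star U = 1 := mem_unitaryGroup_iff.mp hH.eigenvectorUnitary.2
  have hU'U : star U * U = 1 := mem_unitaryGroup_iff'.mp hH.eigenvectorUnitary.2
  have hu : IsUnit U := ⟨⟨U, star U, hUU, hU'U⟩, rfl⟩
  have hspec : A = U * diagonal μ * star U := spectral_real hH
  have hμpos : ∀ i, 0 < μ i := fun i => hA.eigenvalues_pos i
  have hconj_smul : ∀ (c : ℝ) (D : Mat),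
      c • (U * D * star U) = U * (c • D) * star U := by
    intro c D
    rw [Matrix.mul_smul, Matrix.smul_mul]
  have hconj_psd : ∀ (f : Fin 3 → ℝ), (∀ i, 0 ≤ f i) →
      (U * diagonal f * star U).PosSemidef := by
    intro f hf
    have hd : (diagonal f).PosSemidef := PosSemidef.diagonal hf
    have := hd.mul_mul_conjTranspose_same U
    rwa [← Matrix.star_eq_conjTranspose] at this
  have hconj_pd : ∀ (f : Fin 3 → ℝ), (∀ i, 0 < f i) →
      (U * diagonal f * star U).PosDef := by
    intro f hf
    have hd : (diagonal f).PosDef := Matrix.posDef_diagonal_iff.mpr hf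
    have := posDef_conjT' hd hu
    rwa [← Matrix.star_eq_conjTranspose] at this
  -- scalars
  have hφ0 : (0:ℝ) < A.det ^ ((1:ℝ)/3) := Real.rpow_pos_of_pos hA.det_pos _
  set g : Fin 3 → ℝ := fun i => φ ^ 2 + 4 * eps * μ i with hgdef
  have hg : ∀ i, 0 ≤ g i := by
    intro i
    have := (hμpos i).le
    have h4 : 0 ≤ 4 * eps * μ i := by positivity
    positivity
  set s : Fin 3 → ℝ := fun i => Real.sqrt (g i) + φ with hsdef
  have hs : ∀ i, 0 < s i := by
    intro i
    rcases eq_or_lt_of_le heps with he | he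
    · have hφeq : φ = A.det ^ ((1:ℝ)/3) := by
        rw [hφdef, ifebmPhi, ← hAdef, ← he]; ring
      have hφpos : 0 < φ := hφeq ▸ hφ0
      have hgeq : g i = φ ^ 2 := by simp [hgdef, ← he]
      have : Real.sqrt (g i) = φ := by
        rw [hgeq, Real.sqrt_sq hφpos.le]
      simp only [hsdef]
      rw [this]; linarith
    · have hlt : φ ^ 2 < g i := by
        have := hμpos i
        simp only [hgdef]
        nlinarith
      have h2 : |φ| < Real.sqrt (g i) := by
        rw [← Real.sqrt_sq_eq_abs]
        exact Real.sqrt_lt_sqrt (sq_nonneg φ) hlt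
      have h3 : -φ ≤ |φ| := neg_le_abs φ
      simp only [hsdef]
      linarith
  -- the matrix φ²I + 4εA
  set M1 : Mat := φ ^ 2 • (1 : Mat) + (4 * eps) • A with hM1def
  have hdg : diagonal g = φ ^ 2 • (1 : Mat) + (4 * eps) • diagonal μ := by
    ext i j
    rcases eq_or_ne i j with rfl | h
    · simp [hgdef, Matrix.one_apply]
    · simp [Matrix.diagonal_apply_ne _ h, Matrix.one_apply_ne h]
  have hM1 : M1 = U * diagonal g * star U := by
    rw [hM1def, hdg, Matrix.mul_add, Matrix.add_mul, ← hconj_smul, ← hconj_smul,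
      mul_one, hUU, ← hspec]
  have hM1psd : M1.PosSemidef := by
    rw [hM1]; exact hconj_psd g hg
  -- the square root
  have hRpsd : (U * diagonal (fun i => Real.sqrt (g i)) * star U).PosSemidef :=
    hconj_psd _ (fun i => Real.sqrt_nonneg _)
  have hQ : msqrt M1 = U * diagonal (fun i => Real.sqrt (g i)) * star U := by
    rw [msqrt_eq hM1psd]
    open scoped MatrixOrder in refine CFC.sqrt_unique ?_ hRpsd.nonneg
    rw [conj_mul_conj hU'U, diagonal_mul_diagonal, hM1]
    have hfun : (fun i => Real.sqrt (g i) * Real.sqrt (g i)) = g :=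
      funext fun i => Real.mul_self_sqrt (hg i)
    rw [hfun]
  -- S = sqrt + φ I
  have hS : msqrt M1 + φ • (1 : Mat) = U * diagonal s * star U := by
    have hds : diagonal s = diagonal (fun i => Real.sqrt (g i)) + φ • (1 : Mat) := by
      ext i j
      rcases eq_or_ne i j with rfl | h
      · simp [hsdef, Matrix.one_apply]
      · simp [Matrix.diagonal_apply_ne _ h, Matrix.one_apply_ne h]
    rw [hQ, hds, Matrix.mul_add, Matrix.add_mul, ← hconj_smul, mul_one, hUU]
  have hSpd : (msqrt M1 + φ • (1 : Mat)).PosDef := by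
    rw [hS]; exact hconj_pd s hs
  -- S⁻¹
  have hSinv : (msqrt M1 + φ • (1 : Mat))⁻¹ = U * diagonal (fun i => (s i)⁻¹) * star U := by
    apply Matrix.inv_eq_right_inv
    rw [hS, conj_mul_conj hU'U, diagonal_mul_diagonal]
    have : (fun i => s i * (s i)⁻¹) = fun _ => (1:ℝ) := by
      funext i; exact mul_inv_cancel₀ (hs i).ne'
    rw [this, Matrix.diagonal_one, mul_one, hUU]
  -- X
  have hX : ifebmX lam eps C Ci0 = U * diagonal (fun i => 2 * μ i * (s i)⁻¹) * star U := by
    show (2 : ℝ) • A * (msqrt M1 + φ • (1 : Mat))⁻¹ = _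
    rw [hSinv, hspec, hconj_smul, conj_mul_conj hU'U, ← diagonal_smul,
      diagonal_mul_diagonal]
    have hfun : (fun i => ((2:ℝ) • μ) i * (fun i => (s i)⁻¹) i)
        = fun i => 2 * μ i * (s i)⁻¹ := by
      funext i
      simp [mul_assoc]
    rw [hfun]
  have hXpd : (ifebmX lam eps C Ci0).PosDef := by
    rw [hX]
    refine hconj_pd _ (fun i => ?_)
    have := hμpos i
    have := hs i
    positivity
  -- (d)
  have hCs : (msqrt C).PosDef := msqrt_posDef hC
  have hY : (msqrt C * ifebmX lam eps C Ci0 * msqrt C).PosDef :=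
    posDef_conj_posDef hXpd hCs
  refine ⟨hA, hSpd.isUnit, hXpd, unimod_posDef hY, unimod_det hY.det_pos⟩
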